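/- Let $r < L$ with $0 < L - r \le l_0 < \pi$, let $u : [r,L] \to \mathbb{R}$ be differentiable with Lipschitz derivative, and let $h_u(s) := u(r)\cos(s-r) + \frac{u(L) - u(r)\cos(L-r)}{\sin(L-r)}\sin(s-r)$ be the unique solution of $y'' = -y$ with $y(r) = u(r)$, $y(L) = u(L)$. Then $\int_r^L (u(s) - h_u(s))^2\, ds \le \frac{1}{[(\pi/l_0)^2 - 1]^2} \int_r^L (u''(s) + u(s))^2\, ds$, where $u''$ is the a.e. derivative of $u'$. -/

import Mathlib

open Filter Set Real Topology intervalIntegral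

open MeasureTheory

lemma ftc_lip (g : ℝ → ℝ) (M : NNReal) (hg : LipschitzWith M g) (a b : ℝ) (hab : a ≤ b) :
    ∫ x in a..b, deriv g x = g b - g a := by
  have hgc : Continuous g := hg.continuous
  set F : ℕ → ℝ → ℝ := fun n x => (g (x + ((n : ℝ) + 1)⁻¹) - g x) * ((n : ℝ) + 1) with hF
  have hδpos : ∀ n : ℕ, (0:ℝ) < ((n : ℝ) + 1)⁻¹ := fun n => by positivity
  have hδ0 : Tendsto (fun n : ℕ => ((n : ℝ) + 1)⁻¹) atTop (𝓝 0) :=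
    tendsto_one_div_add_atTop_nhds_zero_nat.congr (fun n => by rw [one_div])
  -- pointwise ae convergence
  have hae : ∀ᵐ x : ℝ, Tendsto (fun n => F n x) atTop (𝓝 (deriv g x)) := by
    filter_upwards [hg.ae_differentiableAt (μ := volume)] with x hx
    have hd : HasDerivAt g (deriv g x) x := hx.hasDerivAt
    have := (hasDerivAt_iff_tendsto_slope.1 hd)
    have hseq : Tendsto (fun n : ℕ => x + ((n : ℝ) + 1)⁻¹) atTop (𝓝[≠] x) := by
      refine tendsto_nhdsWithin_of_tendsto_nhds_of_eventually_within _ ?_ ?_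
      · simpa using (tendsto_const_nhds.add hδ0)
      · filter_upwards with n
        simp only [mem_compl_iff, mem_singleton_iff]
        nlinarith [hδpos n]
    have := this.comp hseq
    refine this.congr fun n => ?_
    have h1 : x + ((n : ℝ) + 1)⁻¹ - x = ((n : ℝ) + 1)⁻¹ := by ring
    simp [slope, h1, div_eq_mul_inv, inv_inv, mul_comm, hF]
  -- slope convergence for the antiderivative, reusable
  have slopeconv : ∀ (f : ℝ → ℝ) (c d : ℝ), HasDerivAt f d c →
      Tendsto (fun n : ℕ => (f (c + ((n : ℝ) + 1)⁻¹) - f c) * ((n : ℝ) + 1)) atTop (𝓝 d) := by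
    intro f c d hd
    have hslope := hasDerivAt_iff_tendsto_slope.1 hd
    have hseq : Tendsto (fun n : ℕ => c + ((n : ℝ) + 1)⁻¹) atTop (𝓝[≠] c) := by
      refine tendsto_nhdsWithin_of_tendsto_nhds_of_eventually_within _ ?_ ?_
      · simpa using (tendsto_const_nhds.add hδ0)
      · filter_upwards with n
        simp only [mem_compl_iff, mem_singleton_iff]
        nlinarith [hδpos n]
    refine (hslope.comp hseq).congr fun n => ?_
    have h1 : c + ((n : ℝ) + 1)⁻¹ - c = ((n : ℝ) + 1)⁻¹ := by ring
    simp [slope, h1, div_eq_mul_inv, inv_inv, mul_comm]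
  -- dominated convergence
  have hFm : ∀ n : ℕ, Continuous (F n) := fun n => ((hgc.comp (by continuity)).sub hgc).mul continuous_const
  have hbound : ∀ n : ℕ, ∀ᵐ x ∂(volume.restrict (Ioc a b)), ‖F n x‖ ≤ (M : ℝ) := by
    intro n
    refine ae_of_all _ fun x => ?_
    have := hg.dist_le_mul (x + ((n : ℝ) + 1)⁻¹) x
    rw [Real.dist_eq, Real.dist_eq] at this
    have h1 : x + ((n : ℝ) + 1)⁻¹ - x = ((n : ℝ) + 1)⁻¹ := by ring
    rw [h1, abs_of_pos (hδpos n)] at this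
    have hn : (0:ℝ) < (n : ℝ) + 1 := by positivity
    rw [Real.norm_eq_abs, hF, abs_mul, abs_of_pos hn]
    calc |g (x + ((n : ℝ) + 1)⁻¹) - g x| * ((n:ℝ)+1)
        ≤ ((M : ℝ) * ((n : ℝ) + 1)⁻¹) * ((n:ℝ)+1) := by gcongr
      _ = (M : ℝ) := by field_simp
  have T1 : Tendsto (fun n => ∫ x in Ioc a b, F n x) atTop
      (𝓝 (∫ x in Ioc a b, deriv g x)) := by
    refine tendsto_integral_of_dominated_convergence (fun _ => (M : ℝ))
      (fun n => (hFm n).aestronglyMeasurable) ?_ hbound (ae_restrict_of_ae hae)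
    exact integrableOn_const measure_Ioc_lt_top.ne
  -- compute each integral
  have hHc : ∀ c : ℝ, HasDerivAt (fun t => ∫ x in a..t, g x) (g c) c := by
    intro c
    exact (intervalIntegral.integral_hasStrictDerivAt_right
      (hgc.intervalIntegrable a c) hgc.stronglyMeasurable.stronglyMeasurableAtFilter
      hgc.continuousAt).hasDerivAt
  set H : ℝ → ℝ := fun t => ∫ x in a..t, g x with hH
  have hint : ∀ c d : ℝ, IntervalIntegrable g volume c d := fun c d => hgc.intervalIntegrable c d
  have hcomp : ∀ n : ℕ, (∫ x in a..b, F n x)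
      = ((H (b + ((n : ℝ) + 1)⁻¹) - H b) - (H (a + ((n : ℝ) + 1)⁻¹) - H a)) * ((n : ℝ) + 1) := by
    intro n
    have e1 : (∫ x in a..b, F n x)
        = (∫ x in a..b, (g (x + ((n : ℝ) + 1)⁻¹) - g x)) * ((n : ℝ) + 1) := by
      rw [← intervalIntegral.integral_mul_const]
    have e2 : (∫ x in a..b, (g (x + ((n : ℝ) + 1)⁻¹) - g x))
        = (∫ x in a..b, g (x + ((n : ℝ) + 1)⁻¹)) - ∫ x in a..b, g x := by
      refine intervalIntegral.integral_sub ?_ (hint a b)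
      have := (hint (a + ((n : ℝ) + 1)⁻¹) (b + ((n : ℝ) + 1)⁻¹)).comp_add_right ((n : ℝ) + 1)⁻¹
      simpa using this
    have e3 : (∫ x in a..b, g (x + ((n : ℝ) + 1)⁻¹))
        = ∫ x in (a + ((n : ℝ) + 1)⁻¹)..(b + ((n : ℝ) + 1)⁻¹), g x :=
      intervalIntegral.integral_comp_add_right _ _
    have e4 : ∀ c : ℝ, (∫ x in c..(c + ((n : ℝ) + 1)⁻¹), g x) = H (c + ((n : ℝ) + 1)⁻¹) - H c := by
      intro c
      have := intervalIntegral.integral_add_adjacent_intervals (hint a c) (hint c (c + ((n : ℝ) + 1)⁻¹))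
      simp only [hH] at *
      linarith [this]
    have e5 : (∫ x in (a + ((n : ℝ) + 1)⁻¹)..(b + ((n : ℝ) + 1)⁻¹), g x)
        = (∫ x in a..b, g x) + (∫ x in b..(b + ((n : ℝ) + 1)⁻¹), g x)
          - ∫ x in a..(a + ((n : ℝ) + 1)⁻¹), g x := by
      have i1 := intervalIntegral.integral_add_adjacent_intervals
        (hint (a + ((n : ℝ) + 1)⁻¹) b) (hint b (b + ((n : ℝ) + 1)⁻¹))
      have i2 := intervalIntegral.integral_add_adjacent_intervals
        (hint a (a + ((n : ℝ) + 1)⁻¹)) (hint (a + ((n : ℝ) + 1)⁻¹) b)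
      linarith [i1, i2]
    rw [e1, e2, e3, e5, e4 a, e4 b]
    ring
  have T2 : Tendsto (fun n => ∫ x in a..b, F n x) atTop (𝓝 (g b - g a)) := by
    have tb := slopeconv H b (g b) (hHc b)
    have ta := slopeconv H a (g a) (hHc a)
    refine (tb.sub ta).congr fun n => ?_
    rw [hcomp n]; ring
  have T1' : Tendsto (fun n => ∫ x in a..b, F n x) atTop (𝓝 (∫ x in Ioc a b, deriv g x)) := by
    refine T1.congr fun n => ?_
    rw [intervalIntegral.integral_of_le hab]
  have := tendsto_nhds_unique T1' T2
  rw [intervalIntegral.integral_of_le hab]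
  exact this

lemma wirtinger (a b : ℝ) (hab : a < b) (f f' : ℝ → ℝ)
    (hf : ∀ s, HasDerivAt f (f' s) s) (hf'c : Continuous f')
    (hfa : f a = 0) (hfb : f b = 0) (ω : ℝ) (hω : 0 < ω) (hωb : ω * (b - a) < π) :
    ω ^ 2 * ∫ s in a..b, (f s) ^ 2 ≤ ∫ s in a..b, (f' s) ^ 2 := by
  have hfc : Continuous f := continuous_iff_continuousAt.2 fun x => (hf x).continuousAt
  set δ : ℝ := (π - ω * (b - a)) / 2 with hδdef
  have hδ : 0 < δ := by simp only [hδdef]; linarith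
  set arg : ℝ → ℝ := fun s => ω * (s - a) + δ with harg
  have hargc : Continuous arg := by continuity
  have hwpos : ∀ s ∈ Icc a b, 0 < Real.sin (arg s) := by
    intro s hs
    refine Real.sin_pos_of_pos_of_lt_pi ?_ ?_
    · have : 0 ≤ ω * (s - a) := mul_nonneg hω.le (by linarith [hs.1])
      simp only [harg]; linarith
    · have h1 : ω * (s - a) ≤ ω * (b - a) := by
        have := hs.2; nlinarith
      simp only [harg, hδdef]; linarith
  set q : ℝ → ℝ := fun s => ω * Real.cos (arg s) / Real.sin (arg s) with hq
  have hqc : ContinuousOn q (Icc a b) := by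
    apply ContinuousOn.div
    · exact (continuous_const.mul (Real.continuous_cos.comp hargc)).continuousOn
    · exact (Real.continuous_sin.comp hargc).continuousOn
    · exact fun s hs => (hwpos s hs).ne'
  have hargd : ∀ s, HasDerivAt arg ω s := by
    intro s
    have : HasDerivAt (fun s => ω * (s - a) + δ) (ω * 1) s :=
      (((hasDerivAt_id s).sub_const a).const_mul ω).add_const δ
    exact this.congr_deriv (mul_one ω)
  have hqd : ∀ s ∈ Icc a b, HasDerivAt q (-(ω ^ 2) - q s ^ 2) s := by
    intro s hs
    have hN : HasDerivAt (fun s => ω * Real.cos (arg s)) (ω * (-Real.sin (arg s) * ω)) s :=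
      ((Real.hasDerivAt_cos (arg s)).comp s (hargd s)).const_mul ω
    have hD : HasDerivAt (fun s => Real.sin (arg s)) (Real.cos (arg s) * ω) s :=
      (Real.hasDerivAt_sin (arg s)).comp s (hargd s)
    have hDne : Real.sin (arg s) ≠ 0 := (hwpos s hs).ne'
    have := hN.div hD hDne
    refine this.congr_deriv ?_
    have hsc := Real.sin_sq_add_cos_sq (arg s)
    show _ = -(ω ^ 2) - (ω * Real.cos (arg s) / Real.sin (arg s)) ^ 2
    rw [div_pow, div_eq_iff (pow_ne_zero 2 hDne), sub_mul, div_mul_cancel₀ _ (pow_ne_zero 2 hDne)]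
    ring
  have hφd : ∀ s ∈ Icc a b, HasDerivAt (fun s => (f s) ^ 2 * q s)
      (2 * f s * f' s * q s - (f s) ^ 2 * (ω ^ 2 + q s ^ 2)) s := by
    intro s hs
    have h2 : HasDerivAt (fun s => (f s) ^ 2) (2 * f s * f' s) s := by
      have := (hf s).pow 2
      simpa [mul_comm, mul_assoc, Pi.pow_def] using this
    have := h2.mul (hqd s hs)
    refine this.congr_deriv ?_; ring
  have huIcc : uIcc a b = Icc a b := uIcc_of_le hab.le
  have hAc : ContinuousOn (fun s => 2 * f s * f' s * q s - (f s) ^ 2 * (ω ^ 2 + q s ^ 2)) (Icc a b) := by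
    apply ContinuousOn.sub
    · exact ((continuous_const.mul hfc).mul hf'c).continuousOn.mul hqc
    · exact ((hfc.pow 2).continuousOn).mul (continuous_const.continuousOn.add (hqc.pow 2))
  have hAint : IntervalIntegrable (fun s => 2 * f s * f' s * q s - (f s) ^ 2 * (ω ^ 2 + q s ^ 2)) volume a b := by
    rw [← huIcc] at hAc; exact hAc.intervalIntegrable
  have key : ∫ s in a..b, (2 * f s * f' s * q s - (f s) ^ 2 * (ω ^ 2 + q s ^ 2)) = 0 := by
    rw [intervalIntegral.integral_eq_sub_of_hasDerivAt (fun s hs => hφd s (huIcc ▸ hs)) hAint]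
    simp [hfa, hfb]
  have hBint : IntervalIntegrable (fun s => (f' s) ^ 2 - ω ^ 2 * (f s) ^ 2) volume a b :=
    (((hf'c.pow 2).sub (continuous_const.mul (hfc.pow 2)))).intervalIntegrable a b
  have expand : ∀ s, (f' s - q s * f s) ^ 2
      = ((f' s) ^ 2 - ω ^ 2 * (f s) ^ 2) - (2 * f s * f' s * q s - (f s) ^ 2 * (ω ^ 2 + q s ^ 2)) := by
    intro s; ring
  have hnn : 0 ≤ ∫ s in a..b, (f' s - q s * f s) ^ 2 :=
    intervalIntegral.integral_nonneg hab.le fun s _ => sq_nonneg _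
  have heq : ∫ s in a..b, (f' s - q s * f s) ^ 2
      = (∫ s in a..b, (f' s) ^ 2) - ω ^ 2 * ∫ s in a..b, (f s) ^ 2 := by
    rw [intervalIntegral.integral_congr (g := fun s => ((f' s) ^ 2 - ω ^ 2 * (f s) ^ 2)
        - (2 * f s * f' s * q s - (f s) ^ 2 * (ω ^ 2 + q s ^ 2))) (fun s _ => expand s)]
    rw [intervalIntegral.integral_sub hBint hAint, key,
      intervalIntegral.integral_sub (show IntervalIntegrable (fun s => f' s ^ 2) volume a b from
          (hf'c.pow 2).intervalIntegrable a b)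
        (show IntervalIntegrable (fun s => ω ^ 2 * f s ^ 2) volume a b from
          (continuous_const.mul (hfc.pow 2)).intervalIntegrable a b),
      intervalIntegral.integral_const_mul]
    ring
  linarith [heq ▸ hnn]


lemma II' (r L : ℝ) (hrL : r ≤ L) {f : ℝ → ℝ} (hm : MeasureTheory.AEStronglyMeasurable f volume)
    {C : ℝ} (hb : ∀ s ∈ Icc r L, |f s| ≤ C) : IntervalIntegrable f volume r L := by
  rw [intervalIntegrable_iff_integrableOn_Ioc_of_le hrL]
  have hg : Integrable (fun _ : ℝ => C) (volume.restrict (Ioc r L)) :=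
    integrableOn_const measure_Ioc_lt_top.ne
  exact hg.mono' hm.restrict ((ae_restrict_iff' measurableSet_Ioc).2
    (ae_of_all _ fun x hx => by simpa using hb x (Ioc_subset_Icc_self hx)))

theorem stmt7 (r L l0 : ℝ) (u u' : ℝ → ℝ) (hrL : r < L)
    (hlen : L - r ≤ l0) (hl0 : l0 < Real.pi)
    (hderiv : ∀ s, HasDerivAt u (u' s) s)
    (K : NNReal) (hlip : LipschitzWith K u') :
    ∫ s in r..L,
        (u s - (u r * Real.cos (s - r) +
          (u L - u r * Real.cos (L - r)) / Real.sin (L - r) * Real.sin (s - r))) ^ 2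
      ≤ 1 / ((Real.pi / l0) ^ 2 - 1) ^ 2 * ∫ s in r..L, (deriv u' s + u s) ^ 2 := by
  have hπ := Real.pi_pos
  have hl : 0 < L - r := by linarith
  have hl0pos : 0 < l0 := lt_of_lt_of_le hl hlen
  have hsin : 0 < Real.sin (L - r) := Real.sin_pos_of_pos_of_lt_pi hl (by linarith)
  set c : ℝ := (u L - u r * Real.cos (L - r)) / Real.sin (L - r) with hc
  set hu : ℝ → ℝ := fun s => u r * Real.cos (s - r) + c * Real.sin (s - r) with hhu
  set hu' : ℝ → ℝ := fun s => c * Real.cos (s - r) - u r * Real.sin (s - r) with hhu'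
  set h : ℝ → ℝ := fun s => u s - hu s with hh
  set h' : ℝ → ℝ := fun s => u' s - hu' s with hh'
  have hud : ∀ s, HasDerivAt hu (hu' s) s := by
    intro s
    have d1 : HasDerivAt (fun s : ℝ => s - r) 1 s := (hasDerivAt_id s).sub_const r
    have : HasDerivAt hu (u r * (-Real.sin (s - r) * 1) + c * (Real.cos (s - r) * 1)) s := by
      have h0 := (((Real.hasDerivAt_cos (s - r)).comp s d1).const_mul (u r)).add
        (((Real.hasDerivAt_sin (s - r)).comp s d1).const_mul c)
      exact h0
    refine this.congr_deriv ?_; simp only [hhu']; ring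
  have hud' : ∀ s, HasDerivAt hu' (-(hu s)) s := by
    intro s
    have d1 : HasDerivAt (fun s : ℝ => s - r) 1 s := (hasDerivAt_id s).sub_const r
    have : HasDerivAt hu' (c * (-Real.sin (s - r) * 1) - u r * (Real.cos (s - r) * 1)) s := by
      have h0 := (((Real.hasDerivAt_cos (s - r)).comp s d1).const_mul c).sub
        (((Real.hasDerivAt_sin (s - r)).comp s d1).const_mul (u r))
      exact h0
    refine this.congr_deriv ?_; simp only [hhu]; ring
  have hhd : ∀ s, HasDerivAt h (h' s) s := fun s => (hderiv s).sub (hud s)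
  have hh'd : ∀ s, DifferentiableAt ℝ u' s → HasDerivAt h' (deriv u' s + hu s) s := by
    intro s hs
    have := hs.hasDerivAt.sub (hud' s)
    refine this.congr_deriv ?_; ring
  have huc : Continuous u := continuous_iff_continuousAt.2 fun x => (hderiv x).continuousAt
  have hsubc : Continuous (fun s : ℝ => s - r) := continuous_id.sub continuous_const
  have hu'c : Continuous hu' := by
    rw [hhu']
    exact (continuous_const.mul (Real.continuous_cos.comp hsubc)).sub
      (continuous_const.mul (Real.continuous_sin.comp hsubc))
  have huuc : Continuous hu := by
    rw [hhu]
    exact (continuous_const.mul (Real.continuous_cos.comp hsubc)).add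
      (continuous_const.mul (Real.continuous_sin.comp hsubc))
  have hh'c : Continuous h' := hlip.continuous.sub hu'c
  have hhc : Continuous h := huc.sub huuc
  have hr0 : h r = 0 := by simp [hh, hhu]
  have hL0 : h L = 0 := by
    simp only [hh, hhu, hc]
    rw [div_mul_cancel₀ _ hsin.ne']
    ring
  set P : ℝ := ∫ s in r..L, (h s) ^ 2 with hP
  set I1 : ℝ := ∫ s in r..L, (h' s) ^ 2 with hI1
  set Q : ℝ := ∫ s in r..L, (deriv u' s + u s) ^ 2 with hQ
  have hP0 : 0 ≤ P := intervalIntegral.integral_nonneg hrL.le fun s _ => sq_nonneg _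
  have hQ0 : 0 ≤ Q := intervalIntegral.integral_nonneg hrL.le fun s _ => sq_nonneg _
  -- Wirtinger with limiting argument
  have W : (π / l0) ^ 2 * P ≤ I1 := by
    have Wt : ∀ n : ℕ, ((1 - ((n : ℝ) + 2)⁻¹) * (π / l0)) ^ 2 * P ≤ I1 := by
      intro n
      have hn2 : (0:ℝ) < (n : ℝ) + 2 := by positivity
      have hinv : ((n : ℝ) + 2)⁻¹ < 1 := by
        rw [inv_lt_one_iff₀]; right; linarith
      have hinvpos : (0:ℝ) < ((n : ℝ) + 2)⁻¹ := by positivity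
      set ω : ℝ := (1 - ((n : ℝ) + 2)⁻¹) * (π / l0) with hω
      have hωpos : 0 < ω := mul_pos (by linarith) (by positivity)
      have hωb : ω * (L - r) < π := by
        have h1 : ω * (L - r) ≤ ω * l0 := mul_le_mul_of_nonneg_left hlen hωpos.le
        have h2 : ω * l0 = (1 - ((n : ℝ) + 2)⁻¹) * π := by rw [hω, mul_assoc, div_mul_cancel₀ _ hl0pos.ne']
        have h3 : (1 - ((n : ℝ) + 2)⁻¹) * π < π := by nlinarith
        linarith
      exact wirtinger r L hrL h h' hhd hh'c hr0 hL0 ω hωpos hωb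
    have t0 : Tendsto (fun n : ℕ => ((n : ℝ) + 2)⁻¹) atTop (𝓝 0) := by
      have := (tendsto_one_div_add_atTop_nhds_zero_nat (𝕜 := ℝ)).comp (tendsto_add_atTop_nat 1)
      refine this.congr fun n => ?_
      simp only [Function.comp]
      push_cast
      rw [one_div]
      ring_nf
    have Tlim : Tendsto (fun n : ℕ => ((1 - ((n : ℝ) + 2)⁻¹) * (π / l0)) ^ 2 * P) atTop
        (𝓝 ((π / l0) ^ 2 * P)) := by
      have h1 : Tendsto (fun n : ℕ => (1 - ((n : ℝ) + 2)⁻¹) * (π / l0)) atTop (𝓝 (π / l0)) := by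
        have := ((tendsto_const_nhds (x := (1:ℝ))).sub t0).mul_const (π / l0)
        simpa using this
      simpa using (h1.pow 2).mul_const P
    exact le_of_tendsto Tlim (Filter.Eventually.of_forall Wt)
  -- bounds
  obtain ⟨C1, hC1⟩ := (isCompact_Icc (a := r) (b := L)).exists_bound_of_continuousOn hhc.continuousOn
  obtain ⟨C2, hC2⟩ := (isCompact_Icc (a := r) (b := L)).exists_bound_of_continuousOn hh'c.continuousOn
  obtain ⟨Cu, hCu⟩ := (isCompact_Icc (a := r) (b := L)).exists_bound_of_continuousOn huc.continuousOn
  simp only [Real.norm_eq_abs] at hC1 hC2 hCu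
  have hrmem : r ∈ Icc r L := ⟨le_refl r, hrL.le⟩
  have hLmem : L ∈ Icc r L := ⟨hrL.le, le_refl L⟩
  have hC1n : 0 ≤ C1 := le_trans (abs_nonneg _) (hC1 r hrmem)
  have hC2n : 0 ≤ C2 := le_trans (abs_nonneg _) (hC2 r hrmem)
  have hCun : 0 ≤ Cu := le_trans (abs_nonneg _) (hCu r hrmem)
  have hK : ∀ s, |deriv u' s| ≤ (K : ℝ) := by
    intro s
    have h1 : deriv u' s = fderiv ℝ u' s 1 := (fderiv_apply_one_eq_deriv).symm
    calc |deriv u' s| = ‖fderiv ℝ u' s 1‖ := by rw [h1]; rfl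
      _ ≤ ‖fderiv ℝ u' s‖ * ‖(1:ℝ)‖ := (fderiv ℝ u' s).le_opNorm 1
      _ ≤ (K : ℝ) * 1 :=
          mul_le_mul (norm_fderiv_le_of_lipschitz ℝ hlip) (by norm_num) (norm_nonneg _)
            K.coe_nonneg
      _ = (K : ℝ) := mul_one _
  -- Lipschitz setup for integration by parts
  set clamp : ℝ → ℝ := fun x => max (min x L) r with hclamp
  have hclip : LipschitzWith 1 clamp := by
    have := (LipschitzWith.id.min_const L).max_const r
    simpa [hclamp] using this
  have hclmem : ∀ x, clamp x ∈ Icc r L :=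
    fun x => ⟨le_max_right _ _, max_le (min_le_right x L) hrL.le⟩
  have hclid : ∀ x ∈ Icc r L, clamp x = x := by
    intro x hx
    simp only [hclamp]
    rw [min_eq_left hx.2, max_eq_left hx.1]
  have hhlip : LipschitzOnWith (Real.toNNReal C2) h (Icc r L) := by
    apply (convex_Icc r L).lipschitzOnWith_of_nnnorm_hasDerivWithin_le
      (fun x _ => (hhd x).hasDerivWithinAt)
    intro x hx
    rw [← NNReal.coe_le_coe, coe_nnnorm, Real.coe_toNNReal _ hC2n, Real.norm_eq_abs]
    exact hC2 x hx
  have hKhu' : LipschitzWith (Real.toNNReal (|u r| + |c|)) hu' := by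
    rw [← lipschitzOnWith_univ]
    apply convex_univ.lipschitzOnWith_of_nnnorm_hasDerivWithin_le
      (fun x _ => (hud' x).hasDerivWithinAt)
    intro x _
    rw [← NNReal.coe_le_coe, coe_nnnorm, Real.coe_toNNReal _ (by positivity)]
    rw [norm_neg, Real.norm_eq_abs, hhu]
    calc |u r * Real.cos (x - r) + c * Real.sin (x - r)|
        ≤ |u r * Real.cos (x - r)| + |c * Real.sin (x - r)| := abs_add_le _ _
      _ ≤ |u r| * 1 + |c| * 1 := by
          rw [abs_mul, abs_mul]
          gcongr
          · exact Real.abs_cos_le_one _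
          · exact Real.abs_sin_le_one _
      _ = |u r| + |c| := by ring
  have hh'lip : LipschitzWith (K + Real.toNNReal (|u r| + |c|)) h' := hlip.sub hKhu'
  set Ka : ℝ := (K : ℝ) + (|u r| + |c|) with hKa
  have hh'lipR : ∀ x y : ℝ, |h' x - h' y| ≤ Ka * |x - y| := by
    intro x y
    have := hh'lip.dist_le_mul x y
    rw [Real.dist_eq, Real.dist_eq] at this
    refine this.trans (mul_le_mul_of_nonneg_right ?_ (abs_nonneg _))
    push_cast
    rw [Real.coe_toNNReal _ (by positivity)]
  have hhlipR : ∀ x y, x ∈ Icc r L → y ∈ Icc r L → |h x - h y| ≤ C2 * |x - y| := by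
    intro x y hx hy
    have := hhlip.dist_le_mul x hx y hy
    rw [Real.dist_eq, Real.dist_eq] at this
    refine this.trans (mul_le_mul_of_nonneg_right ?_ (abs_nonneg _))
    rw [Real.coe_toNNReal _ hC2n]
  set G : ℝ → ℝ := fun x => h' (clamp x) * h (clamp x) with hG
  set KG : ℝ := C2 * C2 + C1 * Ka with hKG
  have hGlip : LipschitzWith (Real.toNNReal KG) G := by
    apply LipschitzWith.of_dist_le_mul
    intro x y
    rw [Real.dist_eq, Real.dist_eq]
    have hclxy : |clamp x - clamp y| ≤ |x - y| := by
      have := hclip.dist_le_mul x y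
      rw [Real.dist_eq, Real.dist_eq] at this
      simpa using this
    have e1 : G x - G y = h' (clamp x) * (h (clamp x) - h (clamp y))
        + h (clamp y) * (h' (clamp x) - h' (clamp y)) := by simp only [hG]; ring
    calc |G x - G y| ≤ |h' (clamp x) * (h (clamp x) - h (clamp y))|
          + |h (clamp y) * (h' (clamp x) - h' (clamp y))| := by rw [e1]; exact abs_add_le _ _
      _ ≤ C2 * (C2 * |clamp x - clamp y|) + C1 * (Ka * |clamp x - clamp y|) := by
          rw [abs_mul, abs_mul]
          apply add_le_add
          · exact mul_le_mul (hC2 _ (hclmem x)) (hhlipR _ _ (hclmem x) (hclmem y))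
              (abs_nonneg _) hC2n
          · exact mul_le_mul (hC1 _ (hclmem y)) (hh'lipR _ _) (abs_nonneg _) hC1n
      _ ≤ C2 * (C2 * |x - y|) + C1 * (Ka * |x - y|) := by
          have hKa0 : 0 ≤ Ka := by positivity
          gcongr
      _ = KG * |x - y| := by rw [hKG]; ring
      _ ≤ Real.toNNReal KG * |x - y| :=
          mul_le_mul_of_nonneg_right (Real.le_coe_toNNReal _) (abs_nonneg _)
  have hftc : ∫ x in r..L, deriv G x = 0 := by
    rw [ftc_lip G _ hGlip r L hrL.le, hG]
    simp only [hclid r hrmem, hclid L hLmem, hr0, hL0]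
    ring
  -- a.e. identity for deriv G
  have haeq : ∀ᵐ s : ℝ, s ∈ Set.uIoc r L →
      deriv G s = (deriv u' s + u s) * h s - (h s) ^ 2 + (h' s) ^ 2 := by
    have hae1 : ∀ᵐ s : ℝ, DifferentiableAt ℝ u' s := hlip.ae_differentiableAt
    have haeL : ∀ᵐ s : ℝ, s ≠ L := by
      rw [Filter.eventually_iff, mem_ae_iff]
      have : {x : ℝ | x ≠ L}ᶜ = {L} := by ext x; simp
      rw [this]
      exact Real.volume_singleton
    filter_upwards [hae1, haeL] with s hs hsL hmem
    rw [uIoc_of_le hrL.le] at hmem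
    have hsIoo : s ∈ Ioo r L := ⟨hmem.1, lt_of_le_of_ne hmem.2 hsL⟩
    have hev : G =ᶠ[𝓝 s] fun x => h' x * h x := by
      filter_upwards [Ioo_mem_nhds hsIoo.1 hsIoo.2] with x hx
      simp only [hG, hclid x (Ioo_subset_Icc_self hx)]
    have hder : HasDerivAt (fun x => h' x * h x)
        ((deriv u' s + hu s) * h s + h' s * h' s) s := (hh'd s hs).mul (hhd s)
    rw [hev.deriv_eq, hder.deriv]
    have hhs : h s = u s - hu s := by rw [hh]
    rw [hhs]
    ring
  have hmh : MeasureTheory.AEStronglyMeasurable (fun s => deriv u' s) volume :=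
    (measurable_deriv u').aestronglyMeasurable
  have hgb : ∀ s ∈ Icc r L, |deriv u' s + u s| ≤ (K : ℝ) + Cu :=
    fun s hs => (abs_add_le _ _).trans (add_le_add (hK s) (hCu s hs))
  have hJint : IntervalIntegrable (fun s => (deriv u' s + u s) * h s) volume r L := by
    refine II' r L hrL.le (((measurable_deriv u').add huc.measurable).aestronglyMeasurable.mul
      hhc.aestronglyMeasurable) (C := ((K : ℝ) + Cu) * C1) ?_
    intro s hs
    rw [abs_mul]
    exact mul_le_mul (hgb s hs) (hC1 s hs) (abs_nonneg _) (by positivity)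
  have hg2int : IntervalIntegrable (fun s => (deriv u' s + u s) ^ 2) volume r L := by
    refine II' r L hrL.le (((measurable_deriv u').add huc.measurable).pow_const
      2).aestronglyMeasurable (C := ((K : ℝ) + Cu) ^ 2) ?_
    intro s hs
    rw [abs_of_nonneg (sq_nonneg _), ← sq_abs]
    exact pow_le_pow_left₀ (abs_nonneg _) (hgb s hs) 2
  have hsplit : ∫ s in r..L, ((deriv u' s + u s) * h s - (h s) ^ 2 + (h' s) ^ 2)
      = (∫ s in r..L, (deriv u' s + u s) * h s) - P + I1 := by
    rw [intervalIntegral.integral_add (hJint.sub (show IntervalIntegrable (fun s => h s ^ 2) volume r L from (hhc.pow 2).intervalIntegrable r L))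
      (show IntervalIntegrable (fun s => h' s ^ 2) volume r L from (hh'c.pow 2).intervalIntegrable r L),
      intervalIntegral.integral_sub hJint (show IntervalIntegrable (fun s => h s ^ 2) volume r L from (hhc.pow 2).intervalIntegrable r L)]
  set J : ℝ := ∫ s in r..L, (deriv u' s + u s) * h s with hJ
  have hibp : I1 = P - J := by
    have h0 := hftc
    rw [intervalIntegral.integral_congr_ae haeq, hsplit] at h0
    linarith
  -- Cauchy-Schwarz via discriminant
  have hJ2 : J ^ 2 ≤ Q * P := by
    have hquad : ∀ t : ℝ, 0 ≤ Q * (t * t) + (2 * J) * t + P := by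
      intro t
      have hnn : 0 ≤ ∫ s in r..L, (t * (deriv u' s + u s) + h s) ^ 2 :=
        intervalIntegral.integral_nonneg hrL.le fun s _ => sq_nonneg _
      have hexp : ∫ s in r..L, (t * (deriv u' s + u s) + h s) ^ 2
          = t ^ 2 * Q + (2 * t) * J + P := by
        have e : ∀ s, (t * (deriv u' s + u s) + h s) ^ 2
            = t ^ 2 * (deriv u' s + u s) ^ 2 + (2 * t) * ((deriv u' s + u s) * h s)
              + (h s) ^ 2 := fun s => by ring
        rw [intervalIntegral.integral_congr (fun s _ => e s),
          intervalIntegral.integral_add ((hg2int.const_mul (t ^ 2)).add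
            (hJint.const_mul (2 * t))) (show IntervalIntegrable (fun s => h s ^ 2) volume r L from (hhc.pow 2).intervalIntegrable r L),
          intervalIntegral.integral_add (hg2int.const_mul (t ^ 2))
            (hJint.const_mul (2 * t)),
          intervalIntegral.integral_const_mul, intervalIntegral.integral_const_mul]
      rw [hexp] at hnn
      exact hnn.trans_eq (by ring)
    have hd := discrim_le_zero hquad
    rw [discrim] at hd
    have hd' : 4 * J ^ 2 - 4 * (Q * P) ≤ 0 := by linear_combination hd
    linarith only [hd']
  -- assemble
  have hgt1 : 1 < π / l0 := (one_lt_div hl0pos).2 hl0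
  set c2 : ℝ := (π / l0) ^ 2 - 1 with hc2
  have hc2pos : 0 < c2 := by
    rw [hc2]
    have : 1 < (π / l0) ^ 2 := one_lt_pow₀ hgt1 two_ne_zero
    linarith only [this]
  have key1 : c2 * P ≤ -J := by
    have hW' : (π / l0) ^ 2 * P ≤ P - J := hibp ▸ W
    calc c2 * P = (π / l0) ^ 2 * P - P := by rw [hc2]; ring
      _ ≤ (P - J) - P := sub_le_sub_right hW' P
      _ = -J := by ring
  have key2 : (c2 * P) ^ 2 ≤ Q * P := by
    have h0 : 0 ≤ c2 * P := mul_nonneg hc2pos.le hP0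
    have h1 : (c2 * P) ^ 2 ≤ (-J) ^ 2 := pow_le_pow_left₀ h0 key1 2
    rw [neg_sq] at h1
    exact h1.trans hJ2
  have goalEq : (∫ s in r..L,
      (u s - (u r * Real.cos (s - r) + c * Real.sin (s - r))) ^ 2) = P := by
    rw [hP]
  have final : P ≤ 1 / c2 ^ 2 * Q := by
    rcases eq_or_lt_of_le hP0 with hP0' | hPpos
    · rw [← hP0']
      positivity
    · have hc2Q : c2 ^ 2 * P ≤ Q := by
        have key2' : (c2 ^ 2 * P) * P ≤ Q * P := by linear_combination key2
        exact le_of_mul_le_mul_right key2' hPpos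
      calc P = 1 / c2 ^ 2 * (c2 ^ 2 * P) := by field_simp
        _ ≤ 1 / c2 ^ 2 * Q := by
            apply mul_le_mul_of_nonneg_left hc2Q (by positivity)
  calc (∫ s in r..L,
      (u s - (u r * Real.cos (s - r) + c * Real.sin (s - r))) ^ 2) = P := goalEq
    _ ≤ 1 / c2 ^ 2 * Q := final
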